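/- If 0 < β < 1/2 satisfies (π³/96 − 1/π)·β^{-1} + (7/8)ζ(3) − 1 < sin(πβ)/(πβ) − cos(πβ), then ∑_{j=3}^∞ |ĥ_β(j)| < ĥ_β(1), where ĥ_β(j) are the sine Fourier coefficients of h_β. -/

import Mathlib

open Real

noncomputable def hcore (β x : ℝ) : ℝ :=
  if x < β then (x / β + 1)^2 * (1 - x / (2 * β)) - 1 else 1

noncomputable def hprofile (β x : ℝ) : ℝ :=
  if x ≤ 1/2 then hcore β x else hcore β (1 - x)

noncomputable def hcoeff (β : ℝ) (j : ℕ) : ℝ :=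
  2 * ∫ x in (0:ℝ)..1, hprofile β x * Real.sin (j * π * x)


noncomputable def antider (a b c x : ℝ) : ℝ :=
  a * (Real.sin (c*x)/c^2 - x * Real.cos (c*x)/c)
  + b * ((3*x^2/c^2 - 6/c^4) * Real.sin (c*x) + (6*x/c^3 - x^3/c) * Real.cos (c*x))

lemma antider_hasDeriv (a b c : ℝ) (hc : c ≠ 0) (x : ℝ) :
    HasDerivAt (antider a b c) ((a*x + b*x^3) * Real.sin (c*x)) x := by
  have hs : HasDerivAt (fun y : ℝ => Real.sin (c*y)) (c * Real.cos (c*x)) x := by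
    simpa [mul_comm, Function.comp_def] using (Real.hasDerivAt_sin (c*x)).comp x ((hasDerivAt_id x).const_mul c)
  have hco : HasDerivAt (fun y : ℝ => Real.cos (c*y)) (-(c * Real.sin (c*x))) x := by
    simpa [mul_comm, Function.comp_def] using (Real.hasDerivAt_cos (c*x)).comp x ((hasDerivAt_id x).const_mul c)
  have h1 : HasDerivAt (fun y : ℝ => Real.sin (c*y)/c^2 - y * Real.cos (c*y)/c)
      (x * Real.sin (c*x)) x := by
    have := (hs.div_const (c^2)).sub (((hasDerivAt_id x).mul hco).div_const c)
    refine this.congr_deriv ?_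
    simp only [id]
    field_simp
    ring
  have hp1 : HasDerivAt (fun y : ℝ => 3*y^2/c^2 - 6/c^4) (6*x/c^2) x := by
    have := (((hasDerivAt_pow 2 x).const_mul 3).div_const (c^2)).sub_const (6/c^4)
    refine this.congr_deriv ?_
    ring
  have hp2 : HasDerivAt (fun y : ℝ => 6*y/c^3 - y^3/c) (6/c^3 - 3*x^2/c) x := by
    have := (((hasDerivAt_id x).const_mul 6).div_const (c^3)).sub ((hasDerivAt_pow 3 x).div_const c)
    refine this.congr_deriv ?_
    ring
  have h2 : HasDerivAt (fun y : ℝ =>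
      (3*y^2/c^2 - 6/c^4) * Real.sin (c*y) + (6*y/c^3 - y^3/c) * Real.cos (c*y))
      (x^3 * Real.sin (c*x)) x := by
    have := (hp1.mul hs).add (hp2.mul hco)
    refine this.congr_deriv ?_
    field_simp
    ring
  have := (h1.const_mul a).add (h2.const_mul b)
  refine this.congr_deriv ?_
  ring

lemma integral_cubic_sin (a b c lo hi : ℝ) (hc : c ≠ 0) :
    ∫ x in lo..hi, (a*x + b*x^3) * Real.sin (c*x)
      = antider a b c hi - antider a b c lo := by
  apply intervalIntegral.integral_eq_sub_of_hasDerivAt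
    (fun x _ => antider_hasDeriv a b c hc x)
  exact (Continuous.intervalIntegrable (by continuity) _ _)

lemma integral_sin_mul (c lo hi : ℝ) (hc : c ≠ 0) :
    ∫ x in lo..hi, Real.sin (c*x) = (Real.cos (c*lo) - Real.cos (c*hi))/c := by
  have : ∀ x : ℝ, HasDerivAt (fun y : ℝ => -Real.cos (c*y)/c) (Real.sin (c*x)) x := by
    intro x
    have hco : HasDerivAt (fun y : ℝ => Real.cos (c*y)) (-(c * Real.sin (c*x))) x := by
      simpa [mul_comm, Function.comp_def] using (Real.hasDerivAt_cos (c*x)).comp x ((hasDerivAt_id x).const_mul c)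
    have := (hco.neg).div_const c
    refine this.congr_deriv ?_
    field_simp
  rw [intervalIntegral.integral_eq_sub_of_hasDerivAt (fun x _ => this x)
    (Continuous.intervalIntegrable (by continuity) _ _)]
  ring

lemma antider_zero (a b c : ℝ) : antider a b c 0 = 0 := by
  simp [antider]

lemma hcore_cubic (β : ℝ) (hβ0 : 0 < β) {x : ℝ} (h0 : 0 ≤ x) (h1 : x ≤ β) :
    hcore β x = 3/(2*β)*x + (-1/(2*β^3))*x^3 := by
  unfold hcore
  rcases lt_or_eq_of_le h1 with h | h
  · rw [if_pos h]
    field_simp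
    ring
  · rw [h, if_neg (lt_irrefl β)]
    field_simp
    ring

lemma hcoeff_master (β : ℝ) (hβ0 : 0 < β) (hβ : β < 1/2) (j : ℕ) (hj : 1 ≤ j) :
    hcoeff β j = 2*(1-(-1:ℝ)^j) *
      (antider (3/(2*β)) (-1/(2*β^3)) (j*π) β + Real.cos (j*π*β)/(j*π)) := by
  have hβ' : (0:ℝ) ≤ β := hβ0.le
  have hb2 : β ≤ 1/2 := hβ.le
  have h2b : (1:ℝ)/2 ≤ 1 - β := by linarith
  have hb1 : 1 - β ≤ 1 := by linarith
  have hjpos : (0:ℝ) < (j:ℝ) := by exact_mod_cast hj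
  have hc : (j:ℝ)*π ≠ 0 := by positivity
  set c := (j:ℝ)*π with hcdef
  set F := fun x : ℝ => hprofile β x * Real.sin ((j:ℝ) * π * x) with hF
  set g1 := fun x : ℝ => (3/(2*β)*x + (-1/(2*β^3))*x^3) * Real.sin (c*x) with hg1
  -- pointwise identities
  have e1 : Set.EqOn F g1 (Set.uIcc 0 β) := by
    intro x hx
    rw [Set.uIcc_of_le hβ'] at hx
    have hx0 : 0 ≤ x := hx.1
    have hxb : x ≤ β := hx.2
    have hx2 : x ≤ 1/2 := hxb.trans hb2
    simp only [hF, hg1, hprofile, if_pos hx2, hcore_cubic β hβ0 hx0 hxb, hcdef]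
  have e2 : Set.EqOn F (fun x => Real.sin (c*x)) (Set.uIcc β (1/2)) := by
    intro x hx
    rw [Set.uIcc_of_le hb2] at hx
    simp only [hF, hprofile, if_pos hx.2, hcore, if_neg (not_lt.mpr hx.1), one_mul, hcdef]
  have e3 : Set.EqOn F (fun x => Real.sin (c*x)) (Set.uIcc (1/2) (1-β)) := by
    intro x hx
    rw [Set.uIcc_of_le h2b] at hx
    have h1x : ¬ (1 - x < β) := by
      push_neg
      linarith [hx.2]
    simp only [hF, hprofile, hcore, hcdef]
    rcases le_or_gt x (1/2) with h | h
    · have : ¬ (x < β) := by push_neg; linarith [hx.1]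
      rw [if_pos h, if_neg this, one_mul]
    · rw [if_neg (not_le.mpr h), if_neg h1x, one_mul]
  have e4 : Set.EqOn F (fun x => -(-1:ℝ)^j * g1 (1-x)) (Set.uIcc (1-β) 1) := by
    intro x hx
    rw [Set.uIcc_of_le hb1] at hx
    have hxhalf : ¬ (x ≤ 1/2) := by push_neg; linarith [hx.1]
    have h1x0 : 0 ≤ 1 - x := by linarith [hx.2]
    have h1xb : 1 - x ≤ β := by linarith [hx.1]
    have hsin : Real.sin ((j:ℝ)*π*x) = -(-1:ℝ)^j * Real.sin (c*(1-x)) := by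
      have : (j:ℝ)*π*x = (j:ℝ)*π - c*(1-x) := by rw [hcdef]; ring
      rw [this, Real.sin_nat_mul_pi_sub]
      ring
    simp only [hF, hg1, hprofile, if_neg hxhalf, hcore_cubic β hβ0 h1x0 h1xb, hsin]
    ring
  -- integrability
  have cg1 : Continuous g1 := by rw [hg1]; fun_prop
  have csin : Continuous (fun x : ℝ => Real.sin (c*x)) := by fun_prop
  have cg4 : Continuous (fun x : ℝ => -(-1:ℝ)^j * g1 (1-x)) :=
    continuous_const.mul (cg1.comp (continuous_const.sub continuous_id))
  have i1 : IntervalIntegrable F MeasureTheory.volume 0 β :=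
    ((cg1.continuousOn).congr e1).intervalIntegrable
  have i2 : IntervalIntegrable F MeasureTheory.volume β (1/2) :=
    ((csin.continuousOn).congr e2).intervalIntegrable
  have i3 : IntervalIntegrable F MeasureTheory.volume (1/2) (1-β) :=
    ((csin.continuousOn).congr e3).intervalIntegrable
  have i4 : IntervalIntegrable F MeasureTheory.volume (1-β) 1 :=
    ((cg4.continuousOn).congr e4).intervalIntegrable
  -- split the integral
  have hsplit : ∫ x in (0:ℝ)..1, F x
      = (∫ x in (0:ℝ)..β, F x) + (∫ x in β..(1/2:ℝ), F x)
        + (∫ x in (1/2:ℝ)..(1-β), F x) + (∫ x in (1-β)..(1:ℝ), F x) := by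
    rw [intervalIntegral.integral_add_adjacent_intervals i1 i2,
        intervalIntegral.integral_add_adjacent_intervals (i1.trans i2) i3,
        intervalIntegral.integral_add_adjacent_intervals ((i1.trans i2).trans i3) i4]
  -- compute each piece
  have v1 : ∫ x in (0:ℝ)..β, F x = antider (3/(2*β)) (-1/(2*β^3)) c β := by
    rw [intervalIntegral.integral_congr e1, hg1, integral_cubic_sin _ _ _ _ _ hc,
      antider_zero, sub_zero]
  have v2 : ∫ x in β..(1/2:ℝ), F x = (Real.cos (c*β) - Real.cos (c*(1/2)))/c := by
    rw [intervalIntegral.integral_congr e2, integral_sin_mul _ _ _ hc]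
  have v3 : ∫ x in (1/2:ℝ)..(1-β), F x
      = (Real.cos (c*(1/2)) - (-1:ℝ)^j * Real.cos (c*β))/c := by
    rw [intervalIntegral.integral_congr e3, integral_sin_mul _ _ _ hc]
    have : c*(1-β) = (j:ℝ)*π - c*β := by rw [hcdef]; ring
    rw [this, Real.cos_nat_mul_pi_sub]
  have v4 : ∫ x in (1-β)..(1:ℝ), F x
      = -(-1:ℝ)^j * antider (3/(2*β)) (-1/(2*β^3)) c β := by
    rw [intervalIntegral.integral_congr e4, intervalIntegral.integral_const_mul]
    have : ∫ x in (1-β)..(1:ℝ), g1 (1-x) = ∫ x in (0:ℝ)..β, g1 x := by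
      have := intervalIntegral.integral_comp_sub_left (a := 1-β) (b := 1) g1 1
      simpa using this
    rw [this, hg1, integral_cubic_sin _ _ _ _ _ hc, antider_zero, sub_zero]
  have : hcoeff β j = 2 * ∫ x in (0:ℝ)..1, F x := rfl
  rw [this, hsplit, v1, v2, v3, v4]
  have hcβ : c*β = (j:ℝ)*π*β := by rw [hcdef]
  rw [hcβ] at *
  field_simp
  ring

lemma hcoeff_even (β : ℝ) (hβ0 : 0 < β) (hβ : β < 1/2) (j : ℕ) (hj : Even j) (hj1 : 1 ≤ j) :
    hcoeff β j = 0 := by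
  rw [hcoeff_master β hβ0 hβ j hj1, hj.neg_one_pow]
  ring

lemma hcoeff_odd (β : ℝ) (hβ0 : 0 < β) (hβ : β < 1/2) (j : ℕ) (hj : Odd j) :
    hcoeff β j = 12/((j:ℝ)^3*π^3*β^2) *
      (Real.sin ((j:ℝ)*π*β)/((j:ℝ)*π*β) - Real.cos ((j:ℝ)*π*β)) := by
  have hj1 : 1 ≤ j := hj.pos
  have hjpos : (0:ℝ) < (j:ℝ) := by exact_mod_cast hj1
  rw [hcoeff_master β hβ0 hβ j hj1, hj.neg_one_pow]
  unfold antider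
  have hπ : π ≠ 0 := Real.pi_ne_zero
  have hβ' : β ≠ 0 := ne_of_gt hβ0
  have hj' : (j:ℝ) ≠ 0 := ne_of_gt hjpos
  field_simp
  ring


lemma zeta3_re : (riemannZeta 3).re = ∑' n : ℕ, 1/((n:ℝ))^3 := by
  have h : riemannZeta 3 = ∑' n : ℕ, 1 / (n : ℂ) ^ 3 := by
    have := zeta_nat_eq_tsum_of_gt_one (k := 3) (by norm_num)
    simpa using this
  have h2 : ∀ n : ℕ, (1 / (n:ℂ)^3) = ((1/(n:ℝ)^3 : ℝ) : ℂ) := by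
    intro n; push_cast; ring
  rw [h, tsum_congr h2, ← Complex.ofReal_tsum, Complex.ofReal_re]

lemma summable_odd_pow (p : ℕ) (hp : 1 < p) :
    Summable (fun k : ℕ => 1/((2*k+1:ℕ):ℝ)^p) := by
  have hs : Summable (fun k : ℕ => 1/((k+1:ℕ):ℝ)^p) := by
    have := (summable_one_div_nat_pow.mpr hp).comp_injective (add_left_injective 1)
    simpa [Function.comp_def] using this
  apply Summable.of_nonneg_of_le (fun k => by positivity) _ hs
  intro k
  apply one_div_le_one_div_of_le (by positivity)
  apply pow_le_pow_left₀ (by positivity)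
  push_cast
  linarith

lemma even_part (p : ℕ) (Z : ℝ) (h : HasSum (fun n : ℕ => 1/((n:ℝ))^p) Z) :
    HasSum (fun k : ℕ => 1/(((2*k:ℕ)):ℝ)^p) ((1/2^p) * Z) := by
  have := h.mul_left (1/2^p)
  convert this using 2 with k
  · rfl
  push_cast
  rw [mul_pow, div_mul_eq_div_div, div_div]
  ring_nf

lemma odd_part (p : ℕ) (hp : 1 < p) (Z : ℝ) (h : HasSum (fun n : ℕ => 1/((n:ℝ))^p) Z) :
    HasSum (fun k : ℕ => 1/((2*k+1:ℕ):ℝ)^p) ((1 - 1/2^p) * Z) := by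
  have ho := summable_odd_pow p hp
  have he := even_part p Z h
  have key := tsum_even_add_odd (f := fun n : ℕ => 1/((n:ℝ))^p) he.summable ho
  rw [he.tsum_eq, h.tsum_eq] at key
  have hv : ∑' k : ℕ, 1/((2*k+1:ℕ):ℝ)^p = (1 - 1/2^p) * Z := by linarith
  exact (Summable.hasSum_iff ho).mpr hv

lemma shifted_odd (p : ℕ) (hp : 1 < p) (Z : ℝ) (h : HasSum (fun n : ℕ => 1/((n:ℝ))^p) Z) :
    HasSum (fun k : ℕ => 1/((2*k+3:ℕ):ℝ)^p) ((1 - 1/2^p) * Z - 1) := by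
  have ho := odd_part p hp Z h
  have h2 : (fun k : ℕ => 1/((2*k+3:ℕ):ℝ)^p)
      = (fun n : ℕ => (fun k : ℕ => 1/((2*k+1:ℕ):ℝ)^p) (n+1)) := by
    funext n
    have : 2*(n+1)+1 = 2*n+3 := by ring
    simp only [this]
  rw [h2]
  exact (hasSum_nat_add_iff (f := fun k : ℕ => 1/((2*k+1:ℕ):ℝ)^p) 1).mpr (by simpa using ho)

lemma hS4 : HasSum (fun k : ℕ => 1/((2*k+3:ℕ):ℝ)^4) (π^4/96 - 1) := by
  have := shifted_odd 4 (by norm_num) (π^4/90) hasSum_zeta_four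
  convert this using 2
  ring

lemma hS3 : HasSum (fun k : ℕ => 1/((2*k+3:ℕ):ℝ)^3)
    ((7/8) * (riemannZeta 3).re - 1) := by
  have hsum : Summable (fun n : ℕ => 1/((n:ℝ))^3) := summable_one_div_nat_pow.mpr (by norm_num)
  have := shifted_odd 3 (by norm_num) _ hsum.hasSum
  rw [zeta3_re]
  have h78 : (7:ℝ)/8 = 1 - 1/2^3 := by norm_num
  rw [h78]
  exact this

theorem stmt_9 (β : ℝ) (hβ0 : 0 < β) (hβ : β < 1/2)
    (h : (π^3 / 96 - 1 / π) * β⁻¹ + (7/8) * (riemannZeta 3).re - 1 <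
      Real.sin (π * β) / (π * β) - Real.cos (π * β)) :
    ∑' j : ℕ, |hcoeff β (j + 3)| < hcoeff β 1 := by
  have hπ : 0 < π := Real.pi_pos
  set K : ℝ := 12/(π^3*β^2) with hKdef
  have hK : 0 < K := by positivity
  set B : ℕ → ℝ := fun k =>
    K * ((1/(π*β)) * (1/((2*k+3:ℕ):ℝ)^4) + 1/((2*k+3:ℕ):ℝ)^3) with hBdef
  have habs : ∀ k : ℕ, |hcoeff β (2*k+3)| ≤ B k := by
    intro k
    have hodd : Odd (2*k+3) := ⟨k+1, by ring⟩
    rw [hcoeff_odd β hβ0 hβ _ hodd]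
    have hn3 : (3:ℝ) ≤ ((2*k+3:ℕ):ℝ) := by push_cast; linarith [Nat.cast_nonneg (α := ℝ) k]
    set n : ℝ := ((2*k+3:ℕ):ℝ) with hn
    have hnpos : (0:ℝ) < n := by linarith
    have ht : 0 < n*π*β := by positivity
    have hb1 : |Real.sin (n*π*β)/(n*π*β) - Real.cos (n*π*β)| ≤ 1/(n*π*β) + 1 := by
      refine (abs_sub _ _).trans (add_le_add ?_ (Real.abs_cos_le_one _))
      rw [abs_div, abs_of_pos ht]
      exact (div_le_div_iff_of_pos_right ht).mpr (Real.abs_sin_le_one _)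
    have hcpos : (0:ℝ) < 12/(n^3*π^3*β^2) := by positivity
    calc |12/(n^3*π^3*β^2) * (Real.sin (n*π*β)/(n*π*β) - Real.cos (n*π*β))|
        = 12/(n^3*π^3*β^2) * |Real.sin (n*π*β)/(n*π*β) - Real.cos (n*π*β)| := by
          rw [abs_mul, abs_of_pos hcpos]
      _ ≤ 12/(n^3*π^3*β^2) * (1/(n*π*β) + 1) := by
          exact mul_le_mul_of_nonneg_left hb1 hcpos.le
      _ = B k := by
          have hβ' : β ≠ 0 := ne_of_gt hβ0
          have hπ' : π ≠ 0 := ne_of_gt hπ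
          have hn' : n ≠ 0 := ne_of_gt hnpos
          simp only [hBdef, hKdef, ← hn]
          field_simp
  have hBsum : HasSum B
      (K * ((1/(π*β)) * (π^4/96 - 1) + ((7/8)*(riemannZeta 3).re - 1))) := by
    exact ((hS4.mul_left (1/(π*β))).add hS3).mul_left K
  have hsummOdd : Summable (fun k : ℕ => |hcoeff β (2*k+3)|) :=
    Summable.of_nonneg_of_le (fun k => abs_nonneg _) habs hBsum.summable
  have hzero : (fun k : ℕ => |hcoeff β (2*k+1+3)|) = fun _ => (0:ℝ) := by
    funext k
    rw [hcoeff_even β hβ0 hβ _ ⟨k+2, by ring⟩ (by omega), abs_zero]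
  have hsummEven : Summable (fun k : ℕ => |hcoeff β (2*k+1+3)|) := by
    rw [hzero]; exact summable_zero
  have hT : ∑' j : ℕ, |hcoeff β (j+3)| = ∑' k : ℕ, |hcoeff β (2*k+3)| := by
    rw [← tsum_even_add_odd (f := fun j : ℕ => |hcoeff β (j+3)|) hsummOdd hsummEven,
      hzero, tsum_zero, add_zero]
  have hle : ∑' k : ℕ, |hcoeff β (2*k+3)| ≤
      K * ((1/(π*β)) * (π^4/96 - 1) + ((7/8)*(riemannZeta 3).re - 1)) := by
    rw [← hBsum.tsum_eq]
    exact Summable.tsum_le_tsum habs hsummOdd hBsum.summable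
  have h1 : hcoeff β 1 = K * (Real.sin (π*β)/(π*β) - Real.cos (π*β)) := by
    have := hcoeff_odd β hβ0 hβ 1 odd_one
    rw [this, hKdef]
    norm_num
  have hA : K * ((1/(π*β)) * (π^4/96 - 1) + ((7/8)*(riemannZeta 3).re - 1))
      = K * ((π^3/96 - 1/π)*β⁻¹ + (7/8)*(riemannZeta 3).re - 1) := by
    have hv : (1/(π*β)) * (π^4/96 - 1) = (π^3/96 - 1/π)*β⁻¹ := by
      field_simp
    rw [hv]
    ring
  rw [hT, h1]
  calc ∑' k : ℕ, |hcoeff β (2*k+3)| ≤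
      K * ((1/(π*β)) * (π^4/96 - 1) + ((7/8)*(riemannZeta 3).re - 1)) := hle
    _ = K * ((π^3/96 - 1/π)*β⁻¹ + (7/8)*(riemannZeta 3).re - 1) := hA
    _ < K * (Real.sin (π*β)/(π*β) - Real.cos (π*β)) := by
        exact mul_lt_mul_of_pos_left h hK
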